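/- Let φ be a stability function on an abelian length category A and p ∈ P. Then T_p equals the class of objects M such that φ(N) ≥ p for every nonzero quotient N of M, and T_p equals Filt(A_{≥p}), the class of objects admitting a finite filtration whose subquotients are φ-semistable of phase ≥ p. -/

import Mathlib

open CategoryTheory CategoryTheory.Limits

universe u v

variable {C : Type u} [Category.{v} C] [Abelian C] {P : Type*} [LinearOrder P]

/-- The see-saw property for a stability function, on short exact sequences of nonzero objects. -/
def SeeSaw (φ : C → P) : Prop :=
  ∀ S : ShortComplex C, S.ShortExact →
    ¬ IsZero S.X₁ → ¬ IsZero S.X₂ → ¬ IsZero S.X₃ →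
    (φ S.X₁ < φ S.X₂ ∧ φ S.X₂ < φ S.X₃) ∨
    (φ S.X₃ < φ S.X₂ ∧ φ S.X₂ < φ S.X₁) ∨
    (φ S.X₁ = φ S.X₂ ∧ φ S.X₂ = φ S.X₃)

/-- A stability function is constant on isomorphism classes. -/
def IsoInvariant (φ : C → P) : Prop := ∀ ⦃M N : C⦄, (M ≅ N) → φ M = φ N

/-- `M` is φ-semistable: every nonzero proper subobject has phase ≤ φ M. -/
def Semistable (φ : C → P) (M : C) : Prop :=
  ∀ ⦃L : C⦄ (i : L ⟶ M), Mono i → ¬ IsZero L → ¬ IsIso i → φ L ≤ φ M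

/-- `M` is φ-stable: every nonzero proper subobject has phase < φ M. -/
def Stable (φ : C → P) (M : C) : Prop :=
  ∀ ⦃L : C⦄ (i : L ⟶ M), Mono i → ¬ IsZero L → ¬ IsIso i → φ L < φ M

/-- `(N, q)` is a maximally destabilizing quotient of `M`. -/
def IsMDQ (φ : C → P) {M N : C} (q : M ⟶ N) : Prop :=
  Epi q ∧ ¬ IsZero N ∧ φ N ≤ φ M ∧
    ∀ ⦃N' : C⦄ (q' : M ⟶ N'), Epi q' → ¬ IsZero N' →
      φ N ≤ φ N' ∧ (φ N' = φ N → ∃ f : N ⟶ N', q' = q ≫ f)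

/-- Membership in `T_p`: zero, or the maximally destabilizing quotient has phase `≥ p`. -/
def TpMDQ (φ : C → P) (p : P) (M : C) : Prop :=
  IsZero M ∨ ∃ (N : C) (q : M ⟶ N), IsMDQ φ q ∧ p ≤ φ N

/-- Membership in the torsion class `T_p`: the quotient-object characterization. -/
def TpQuot (φ : C → P) (p : P) (M : C) : Prop :=
  ∀ ⦃N : C⦄ (g : M ⟶ N), Epi g → ¬ IsZero N → p ≤ φ N

/-- `Filt X`: objects admitting a finite filtration with subquotients in `X`. -/
inductive Filt {C : Type u} [Category.{v} C] [Abelian C] (X : C → Prop) : C → Prop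
  | of_isZero {M : C} (h : IsZero M) : Filt X M
  | step (S : ShortComplex C) (hS : S.ShortExact) (h1 : Filt X S.X₁) (h3 : X S.X₃) :
      Filt X S.X₂

/-- The class of φ-semistable objects of phase `≥ p`, together with the zero objects. -/
def Ageq {C : Type u} [Category.{v} C] [Abelian C] {P : Type*} [LinearOrder P]
    (φ : C → P) (p : P) (M : C) : Prop :=
  IsZero M ∨ (Semistable φ M ∧ p ≤ φ M)

/-! ### Auxiliary lemmas -/

set_option linter.unusedSectionVars false

namespace TpAux

open CategoryTheory.Abelian CategoryTheory.Abelian.Pseudoelement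

attribute [local instance] Pseudoelement.objectToSort Pseudoelement.homToFun

section ZeroHelpers

variable {C : Type u} [Category.{v} C] [Abelian C]

lemma isZero_tgt_of_epi_eq_zero {M Q : C} (g : M ⟶ Q) (he : Epi g) (h : g = 0) : IsZero Q := by
  rw [IsZero.iff_id_eq_zero]
  haveI := he
  rw [← cancel_epi g, h]; simp

lemma isZero_tgt_of_epi {M Q : C} (g : M ⟶ Q) (he : Epi g) (h : IsZero M) : IsZero Q := by
  haveI := he; exact IsZero.of_epi g h

lemma isZero_src_of_mono_eq_zero {A M : C} (i : A ⟶ M) (hm : Mono i) (h : i = 0) : IsZero A := by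
  haveI := hm
  rw [IsZero.iff_id_eq_zero, ← cancel_mono i, h]; simp

lemma epi_of_isZero_cokernel {A M : C} (i : A ⟶ M) (h : IsZero (cokernel i)) : Epi i :=
  Preadditive.epi_of_cancel_zero _ (fun g hg => by
    have h0 : cokernel.π i = 0 := h.eq_of_tgt _ _
    rw [← cokernel.π_desc i g hg, h0, zero_comp])

lemma not_isZero_cokernel {A M : C} (i : A ⟶ M) (hm : Mono i) (h : ¬ IsIso i) :
    ¬ IsZero (cokernel i) := fun hz => by
  haveI := hm
  haveI := epi_of_isZero_cokernel i hz
  exact h (isIso_of_mono_of_epi i)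

lemma mono_of_isZero_kernel {M N : C} (q : M ⟶ N) (h : IsZero (kernel q)) : Mono q :=
  Preadditive.mono_of_cancel_zero _ (fun g hg => by
    have h0 : kernel.ι q = 0 := h.eq_of_src _ _
    rw [← kernel.lift_ι q g hg, h0, comp_zero])

lemma epi_of_isIso_comp {X Y Z : C} (j : X ⟶ Y) (i : Y ⟶ Z) (h : IsIso (j ≫ i)) : Epi i := by
  haveI := h
  have w : (inv (j ≫ i) ≫ j) ≫ i = 𝟙 Z := by rw [Category.assoc]; exact IsIso.inv_hom_id (j ≫ i)
  exact epi_of_epi_fac w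

lemma not_isIso_comp {X Y Z : C} (j : X ⟶ Y) (i : Y ⟶ Z) (hm : Mono i) (h : ¬ IsIso i) :
    ¬ IsIso (j ≫ i) := fun hiso => by
  haveI := hm
  haveI := epi_of_isIso_comp j i hiso
  exact h (isIso_of_mono_of_epi i)

lemma shortExact_of_mono {A M : C} (i : A ⟶ M) (hm : Mono i) :
    (ShortComplex.mk i (cokernel.π i) (cokernel.condition i)).ShortExact := by
  haveI := hm
  exact ShortComplex.ShortExact.mk'
    (ShortComplex.exact_of_g_is_cokernel _ (cokernelIsCokernel i)) hm inferInstance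

lemma shortExact_of_epi {M N : C} (q : M ⟶ N) (he : Epi q) :
    (ShortComplex.mk (kernel.ι q) q (kernel.condition q)).ShortExact := by
  haveI := he
  exact ShortComplex.ShortExact.mk'
    (ShortComplex.exact_of_f_is_kernel _ (kernelIsKernel q)) inferInstance he

end ZeroHelpers

section WF

variable {C : Type u} [Category.{v} C] [Abelian C]

/-- The "proper subobject" relation. -/
def PSub : C → C → Prop := fun X Y => ∃ i : X ⟶ Y, Mono i ∧ ¬ IsIso i

/-- The "proper quotient" relation. -/
def PQuot : C → C → Prop := fun X Y => ∃ q : Y ⟶ X, Epi q ∧ ¬ IsIso q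

lemma mk_comp_lt' {X Y Z : C} (j : X ⟶ Y) (c : Y ⟶ Z) [Mono j] [Mono c] (hj : ¬ IsIso j) :
    Subobject.mk (j ≫ c) < Subobject.mk c := by
  refine lt_of_le_of_ne (Subobject.mk_le_mk_of_comm j rfl) (fun h => hj ?_)
  have hle : Subobject.mk c ≤ Subobject.mk (j ≫ c) := le_of_eq h.symm
  have hk := Subobject.ofMkLEMk_comp hle
  set k := Subobject.ofMkLEMk c (j ≫ c) hle with hkdef
  have h1' : k ≫ j = 𝟙 Y := (cancel_mono c).1 (by rw [Category.assoc, hk, Category.id_comp])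
  have h2' : j ≫ k = 𝟙 X := (cancel_mono (j ≫ c)).1 (by rw [Category.id_comp, Category.assoc, hk])
  exact ⟨⟨k, h2', h1'⟩⟩

lemma kernel_mk_lt {X Y Z : C} (g : X ⟶ Y) (q : Y ⟶ Z) (hg : Epi g) (hq : Epi q)
    (hni : ¬ IsIso q) : Subobject.mk (kernel.ι g) < Subobject.mk (kernel.ι (g ≫ q)) := by
  haveI := hg; haveI := hq
  have hcond : kernel.ι g ≫ (g ≫ q) = 0 := by rw [← Category.assoc, kernel.condition, zero_comp]
  refine lt_of_le_of_ne
    (Subobject.mk_le_mk_of_comm (kernel.lift _ _ hcond) (kernel.lift_ι _ _ _)) (fun heq => ?_)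
  have hle' : Subobject.mk (kernel.ι (g ≫ q)) ≤ Subobject.mk (kernel.ι g) := le_of_eq heq.symm
  have hk := Subobject.ofMkLEMk_comp hle'
  have hmono : Mono q := by
    apply mono_of_zero_of_map_zero
    intro a ha
    obtain ⟨m, hm⟩ := pseudo_surjective_of_epi g a
    have hm2 : (g ≫ q) m = 0 := by rw [Pseudoelement.comp_apply, hm, ha]
    have hex : (ShortComplex.mk (kernel.ι (g ≫ q)) (g ≫ q) (kernel.condition _)).Exact :=
      ShortComplex.exact_of_f_is_kernel _ (kernelIsKernel _)
    obtain ⟨b, hb⟩ := pseudo_exact_of_exact hex m hm2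
    have hzero : kernel.ι (g ≫ q) ≫ g = 0 := by
      rw [← hk, Category.assoc, kernel.condition, comp_zero]
    calc a = g m := hm.symm
      _ = g ((kernel.ι (g ≫ q)) b) := by rw [hb]
      _ = (kernel.ι (g ≫ q) ≫ g) b := (Pseudoelement.comp_apply _ _ _).symm
      _ = (0 : kernel (g ≫ q) ⟶ Y) b := by rw [hzero]
      _ = 0 := zero_apply _ _
  exact hni (isIso_of_mono_of_epi q)

lemma wf_psub [∀ X : C, IsArtinianObject X] : WellFounded (PSub (C := C)) := by
  rw [WellFounded.wellFounded_iff_has_min]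
  intro s hs
  obtain ⟨x, hx⟩ := hs
  set T : Set (Subobject x) :=
    {A | ∃ (y : C) (i : y ⟶ x) (hm : Mono i), y ∈ s ∧ A = @Subobject.mk _ _ _ _ i hm} with hT
  have hTne : T.Nonempty := ⟨Subobject.mk (𝟙 x), x, 𝟙 x, inferInstance, hx, rfl⟩
  obtain ⟨m, hmT, hmin⟩ := (wellFounded_lt (α := Subobject x)).has_min T hTne
  obtain ⟨y, i, him, hy, rfl⟩ := hmT
  refine ⟨y, hy, fun z hz hrel => ?_⟩
  obtain ⟨j, hjm, hjni⟩ := hrel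
  haveI := him; haveI := hjm
  exact hmin (Subobject.mk (j ≫ i)) ⟨z, j ≫ i, inferInstance, hz, rfl⟩ (mk_comp_lt' j i hjni)

lemma wf_pquot [∀ X : C, IsNoetherianObject X] : WellFounded (PQuot (C := C)) := by
  rw [WellFounded.wellFounded_iff_has_min]
  intro s hs
  obtain ⟨x, hx⟩ := hs
  set T : Set (Subobject x) :=
    {A | ∃ (y : C) (g : x ⟶ y), y ∈ s ∧ Epi g ∧ A = Subobject.mk (kernel.ι g)} with hT
  have hTne : T.Nonempty := ⟨Subobject.mk (kernel.ι (𝟙 x)), x, 𝟙 x, hx, inferInstance, rfl⟩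
  obtain ⟨m, hmT, hmin⟩ := (wellFounded_gt (α := Subobject x)).has_min T hTne
  obtain ⟨y, g, hy, hgepi, rfl⟩ := hmT
  refine ⟨y, hy, fun z hz hrel => ?_⟩
  obtain ⟨q, hqepi, hqni⟩ := hrel
  haveI := hgepi; haveI := hqepi
  exact hmin (Subobject.mk (kernel.ι (g ≫ q))) ⟨z, g ≫ q, hz, inferInstance, rfl⟩
    (kernel_mk_lt g q hgepi hqepi hqni)

end WF

section Stability

variable {C : Type u} [Category.{v} C] [Abelian C] {P : Type*} [LinearOrder P] {φ : C → P}

lemma comp_cokernel_image_zero {X Y : C} (t : X ⟶ Y) :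
    t ≫ cokernel.π (Abelian.image.ι t) = 0 := by
  calc t ≫ cokernel.π (Abelian.image.ι t)
      = Abelian.factorThruImage t ≫ Abelian.image.ι t ≫ cokernel.π (Abelian.image.ι t) := by
        rw [← Category.assoc, Abelian.image.fac]
    _ = 0 := by rw [cokernel.condition, comp_zero]

lemma phase_le_quot (hss : SeeSaw φ) (hiso : IsoInvariant φ) {A Q : C}
    (hA : Semistable φ A) (q : A ⟶ Q) (hq : Epi q) (hQ : ¬ IsZero Q) : φ A ≤ φ Q := by
  haveI := hq
  have hAnz : ¬ IsZero A := fun h => hQ (isZero_tgt_of_epi q hq h)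
  by_cases hK : IsZero (kernel q)
  · haveI := mono_of_isZero_kernel q hK
    haveI := isIso_of_mono_of_epi q
    exact le_of_eq (hiso (asIso q))
  · have hni : ¬ IsIso (kernel.ι q) := by
      intro h
      haveI := h
      have hq0 : q = 0 := by
        rw [← cancel_epi (kernel.ι q), kernel.condition, comp_zero]
      exact hQ (isZero_tgt_of_epi_eq_zero q hq hq0)
    have hKle : φ (kernel q) ≤ φ A := hA (kernel.ι q) inferInstance hK hni
    have hse := shortExact_of_epi q hq
    rcases hss _ hse hK hAnz hQ with ⟨h1, h2⟩ | ⟨h1, h2⟩ | ⟨h1, h2⟩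
    · exact le_of_lt h2
    · exact absurd hKle (not_le.2 h2)
    · exact le_of_eq h2

lemma exists_ss_destab [∀ X : C, IsArtinianObject X] :
    ∀ M : C, ¬ IsZero M → ¬ Semistable φ M →
      ∃ (A : C) (i : A ⟶ M), Mono i ∧ ¬ IsZero A ∧ ¬ IsIso i ∧ Semistable φ A ∧ φ M < φ A :=
  fun M => (wf_psub (C := C)).induction
    (C := fun M => ¬ IsZero M → ¬ Semistable φ M →
      ∃ (A : C) (i : A ⟶ M), Mono i ∧ ¬ IsZero A ∧ ¬ IsIso i ∧ Semistable φ A ∧ φ M < φ A)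
    M (fun M IH hMnz hMns => by
    have hMns' : ¬ ∀ (L : C) (i : L ⟶ M), Mono i → ¬ IsZero L → ¬ IsIso i → φ L ≤ φ M :=
      fun h => hMns (fun L i hm hz hni => h L i hm hz hni)
    push_neg at hMns'
    obtain ⟨L, i, him, hLnz, hini, hlt⟩ := hMns'
    by_cases hLss : Semistable φ L
    · exact ⟨L, i, him, hLnz, hini, hLss, hlt⟩
    · obtain ⟨A, j, hjm, hAnz, hjni, hAss, hlt2⟩ := IH L ⟨i, him, hini⟩ hLnz hLss
      haveI := him; haveI := hjm
      exact ⟨A, j ≫ i, inferInstance, hAnz, not_isIso_comp j i him hini, hAss, hlt.trans hlt2⟩)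

lemma exists_mdq [∀ X : C, IsArtinianObject X] [∀ X : C, IsNoetherianObject X]
    (hss : SeeSaw φ) (hiso : IsoInvariant φ) :
    ∀ M : C, ¬ IsZero M → ∃ (N : C) (q : M ⟶ N), IsMDQ φ q :=
  fun M => (wf_pquot (C := C)).induction
    (C := fun M => ¬ IsZero M → ∃ (N : C) (q : M ⟶ N), IsMDQ φ q) M (fun M IH hMnz => by
    by_cases hMss : Semistable φ M
    · refine ⟨M, 𝟙 M, inferInstance, hMnz, le_refl _, fun N' q' hq' hN' => ?_⟩
      exact ⟨phase_le_quot hss hiso hMss q' hq' hN', fun _ => ⟨q', (Category.id_comp q').symm⟩⟩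
    · obtain ⟨A, i, him, hAnz, hini, hAss, hMlt⟩ := exists_ss_destab M hMnz hMss
      haveI := him
      have hCnz : ¬ IsZero (cokernel i) := not_isZero_cokernel i him hini
      have hcni : ¬ IsIso (cokernel.π i) := fun h => by
        haveI := h
        have h0 : i = 0 := by rw [← cancel_mono (cokernel.π i), cokernel.condition, zero_comp]
        exact hAnz (isZero_src_of_mono_eq_zero i him h0)
      obtain ⟨B, π, hπ⟩ := IH (cokernel i) ⟨cokernel.π i, inferInstance, hcni⟩ hCnz
      obtain ⟨hπe, hBnz, hBle, hπmain⟩ := hπ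
      haveI := hπe
      have hseA := shortExact_of_mono i him
      have hClt : φ (cokernel i) < φ M := by
        rcases hss _ hseA hAnz hMnz hCnz with ⟨h1, h2⟩ | ⟨h1, h2⟩ | ⟨h1, h2⟩
        · exact absurd h1 (not_lt.2 (le_of_lt hMlt))
        · exact h1
        · exact absurd h1 (ne_of_gt hMlt)
      have hBltM : φ B < φ M := lt_of_le_of_lt hBle hClt
      have hBltA : φ B < φ A := hBltM.trans hMlt
      refine ⟨B, cokernel.π i ≫ π, inferInstance, hBnz, le_of_lt hBltM, fun N' q' hq' hN' => ?_⟩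
      haveI := hq'
      by_cases ht : i ≫ q' = 0
      · have hfac : cokernel.π i ≫ cokernel.desc i q' ht = q' := cokernel.π_desc i q' ht
        have hq'' : Epi (cokernel.π i ≫ cokernel.desc i q' ht) := by
          rw [hfac]; exact hq'
        haveI := hq''
        haveI : Epi (cokernel.desc i q' ht) := epi_of_epi (cokernel.π i) _
        obtain ⟨hle2, hfac2⟩ := hπmain (cokernel.desc i q' ht) inferInstance hN'
        refine ⟨hle2, fun heq => ?_⟩
        obtain ⟨f, hf⟩ := hfac2 heq
        exact ⟨f, by rw [← hfac, hf, Category.assoc]⟩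
      · have hA'nz : ¬ IsZero (Abelian.image (i ≫ q')) := fun h => ht (by
          have h0 : Abelian.image.ι (i ≫ q') = 0 := h.eq_of_src _ _
          rw [← Abelian.image.fac (i ≫ q'), h0, comp_zero])
        have hA'phase : φ A ≤ φ (Abelian.image (i ≫ q')) :=
          phase_le_quot hss hiso hAss (Abelian.factorThruImage (i ≫ q')) inferInstance hA'nz
        have hmD : i ≫ (q' ≫ cokernel.π (Abelian.image.ι (i ≫ q'))) = 0 := by
          rw [← Category.assoc]; exact comp_cokernel_image_zero (i ≫ q')
        have hmfac : cokernel.π i ≫ cokernel.desc i _ hmD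
            = q' ≫ cokernel.π (Abelian.image.ι (i ≫ q')) := cokernel.π_desc _ _ _
        have hepi' : Epi (cokernel.π i ≫ cokernel.desc i _ hmD) := by
          rw [hmfac]; exact epi_comp _ _
        haveI := hepi'
        haveI : Epi (cokernel.desc i _ hmD) := epi_of_epi (cokernel.π i) _
        by_cases hDz : IsZero (cokernel (Abelian.image.ι (i ≫ q')))
        · haveI : Epi (Abelian.image.ι (i ≫ q')) := epi_of_isZero_cokernel _ hDz
          haveI : IsIso (Abelian.image.ι (i ≫ q')) := isIso_of_mono_of_epi _
          have hphase : φ (Abelian.image (i ≫ q')) = φ N' :=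
            hiso (asIso (Abelian.image.ι (i ≫ q')))
          have hstrict : φ B < φ N' := by
            rw [← hphase]; exact lt_of_lt_of_le hBltA hA'phase
          exact ⟨le_of_lt hstrict, fun heq => absurd heq (ne_of_gt hstrict)⟩
        · have hDle : φ B ≤ φ (cokernel (Abelian.image.ι (i ≫ q'))) :=
            (hπmain (cokernel.desc i _ hmD) inferInstance hDz).1
          have hseI := shortExact_of_mono (Abelian.image.ι (i ≫ q')) inferInstance
          have hstrict : φ B < φ N' := by
            rcases hss _ hseI hA'nz hN' hDz with ⟨h1, h2⟩ | ⟨h1, h2⟩ | ⟨h1, h2⟩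
            · exact lt_of_lt_of_le (lt_of_lt_of_le hBltA hA'phase) (le_of_lt h1)
            · exact lt_of_le_of_lt hDle h1
            · rw [← h1]; exact lt_of_lt_of_le hBltA hA'phase
          exact ⟨le_of_lt hstrict, fun heq => absurd heq (ne_of_gt hstrict)⟩)

lemma mdq_semistable (hss : SeeSaw φ) {M N : C} (q : M ⟶ N) (hq : IsMDQ φ q) :
    Semistable φ N := by
  obtain ⟨hqe, hNnz, hle, hmain⟩ := hq
  intro L i him hLnz hini
  haveI := him; haveI := hqe
  have hDnz : ¬ IsZero (cokernel i) := not_isZero_cokernel i him hini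
  have hDphase : φ N ≤ φ (cokernel i) := (hmain (q ≫ cokernel.π i) inferInstance hDnz).1
  have hse := shortExact_of_mono i him
  rcases hss _ hse hLnz hNnz hDnz with ⟨h1, h2⟩ | ⟨h1, h2⟩ | ⟨h1, h2⟩
  · exact le_of_lt h1
  · exact absurd hDphase (not_le.2 h1)
  · exact le_of_eq h1

lemma mdq_kernel_quot (hss : SeeSaw φ) {M N : C} (q : M ⟶ N) (hq : IsMDQ φ q)
    {Q : C} (g : kernel q ⟶ Q) (hg : Epi g) (hQnz : ¬ IsZero Q) : φ N ≤ φ Q := by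
  obtain ⟨hqe, hNnz, hle, hmain⟩ := hq
  haveI := hqe; haveI := hg
  haveI : Mono (kernel.ι g ≫ kernel.ι q) := mono_comp _ _
  have hwq : (kernel.ι g ≫ kernel.ι q) ≫ q = 0 := by
    rw [Category.assoc, kernel.condition, comp_zero]
  have hrfac : cokernel.π (kernel.ι g ≫ kernel.ι q) ≫ cokernel.desc _ q hwq = q :=
    cokernel.π_desc _ _ _
  have hre : Epi (cokernel.π (kernel.ι g ≫ kernel.ι q) ≫ cokernel.desc _ q hwq) := by
    rw [hrfac]; exact hqe
  haveI := hre
  haveI : Epi (cokernel.desc _ q hwq) := epi_of_epi (cokernel.π (kernel.ι g ≫ kernel.ι q)) _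
  have hkg : kernel.ι g ≫ (kernel.ι q ≫ cokernel.π (kernel.ι g ≫ kernel.ι q)) = 0 := by
    rw [← Category.assoc, cokernel.condition]
  have hefac : g ≫ Abelian.epiDesc g _ hkg
      = kernel.ι q ≫ cokernel.π (kernel.ι g ≫ kernel.ι q) := Abelian.comp_epiDesc _ _ _
  have hVnz : ¬ IsZero (cokernel (kernel.ι g ≫ kernel.ι q)) := fun h =>
    hNnz (isZero_tgt_of_epi (cokernel.desc _ q hwq) inferInstance h)
  have hVphase : φ N ≤ φ (cokernel (kernel.ι g ≫ kernel.ι q)) :=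
    (hmain (cokernel.π (kernel.ι g ≫ kernel.ι q)) inferInstance hVnz).1
  have hexw := shortExact_of_mono (kernel.ι g ≫ kernel.ι q) inferInstance
  have hexq := shortExact_of_epi q hqe
  have hmono : Mono (Abelian.epiDesc g _ hkg) := by
    apply mono_of_zero_of_map_zero
    intro a ha
    obtain ⟨a', ha'⟩ := pseudo_surjective_of_epi g a
    have h1 : (cokernel.π (kernel.ι g ≫ kernel.ι q)) ((kernel.ι q) a') = 0 := by
      rw [← Pseudoelement.comp_apply, ← hefac, Pseudoelement.comp_apply, ha', ha]
    obtain ⟨b, hb⟩ := pseudo_exact_of_exact hexw.exact _ h1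
    have hb2 : (kernel.ι q) ((kernel.ι g) b) = (kernel.ι q) a' := by
      rw [← Pseudoelement.comp_apply]; exact hb
    have h3 : (kernel.ι g) b = a' := pseudo_injective_of_mono (kernel.ι q) hb2
    calc a = g ((kernel.ι g) b) := by rw [h3, ha']
      _ = (kernel.ι g ≫ g) b := (Pseudoelement.comp_apply _ _ _).symm
      _ = (0 : kernel g ⟶ Q) b := by rw [kernel.condition]
      _ = 0 := zero_apply _ _
  have her : Abelian.epiDesc g _ hkg ≫ cokernel.desc _ q hwq = 0 := by
    apply (cancel_epi g).1
    rw [comp_zero, ← Category.assoc, hefac, Category.assoc, hrfac, kernel.condition]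
  have hS2 : (ShortComplex.mk (Abelian.epiDesc g _ hkg) (cokernel.desc _ q hwq) her).ShortExact := by
    refine ShortComplex.ShortExact.mk' ?_ hmono inferInstance
    apply exact_of_pseudo_exact
    intro b hb
    obtain ⟨m, hm⟩ := pseudo_surjective_of_epi (cokernel.π (kernel.ι g ≫ kernel.ι q)) b
    have hqm : q m = 0 := by
      rw [← hrfac, Pseudoelement.comp_apply, hm]; exact hb
    obtain ⟨k, hk⟩ := pseudo_exact_of_exact hexq.exact m hqm
    refine ⟨g k, ?_⟩
    calc (Abelian.epiDesc g _ hkg) (g k) = (g ≫ Abelian.epiDesc g _ hkg) k :=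
        (Pseudoelement.comp_apply _ _ _).symm
      _ = (kernel.ι q ≫ cokernel.π (kernel.ι g ≫ kernel.ι q)) k := by rw [hefac]
      _ = (cokernel.π (kernel.ι g ≫ kernel.ι q)) ((kernel.ι q) k) :=
        Pseudoelement.comp_apply _ _ _
      _ = (cokernel.π (kernel.ι g ≫ kernel.ι q)) m := by rw [hk]
      _ = b := hm
  rcases hss _ hS2 hQnz hVnz hNnz with ⟨h1, h2⟩ | ⟨h1, h2⟩ | ⟨h1, h2⟩
  · exact absurd hVphase (not_le.2 h2)
  · exact le_of_lt (h1.trans h2)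
  · exact le_of_eq (h2.symm.trans h1.symm)

lemma filt_of_tpQuot [∀ X : C, IsArtinianObject X] [∀ X : C, IsNoetherianObject X]
    (hss : SeeSaw φ) (hiso : IsoInvariant φ) (p : P) (M : C) :
    TpQuot φ p M → Filt (Ageq φ p) M := by
  refine (wf_psub (C := C)).induction (C := fun M => TpQuot φ p M → Filt (Ageq φ p) M) M ?_
  intro M IH hM
  by_cases hMz : IsZero M
  · exact Filt.of_isZero hMz
  · obtain ⟨N, q, hq⟩ := exists_mdq hss hiso M hMz
    haveI := hq.1
    have hNp : p ≤ φ N := hM q hq.1 hq.2.1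
    have hNss : Semistable φ N := mdq_semistable hss q hq
    have hse := shortExact_of_epi q hq.1
    have hker : Filt (Ageq φ p) (kernel q) := by
      by_cases hKz : IsZero (kernel q)
      · exact Filt.of_isZero hKz
      · have hIni : ¬ IsIso (kernel.ι q) := by
          intro h
          haveI := h
          have hq0 : q = 0 := by rw [← cancel_epi (kernel.ι q), kernel.condition, comp_zero]
          exact hq.2.1 (isZero_tgt_of_epi_eq_zero q hq.1 hq0)
        refine IH (kernel q) ⟨kernel.ι q, inferInstance, hIni⟩ ?_
        intro Q g hg hQnz
        exact le_trans hNp (mdq_kernel_quot hss q hq g hg hQnz)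
    exact Filt.step (ShortComplex.mk (kernel.ι q) q (kernel.condition q)) hse hker
      (Or.inr ⟨hNss, hNp⟩)

lemma tpQuot_of_filt (hss : SeeSaw φ) (hiso : IsoInvariant φ) (p : P) {M : C}
    (h : Filt (Ageq φ p) M) : TpQuot φ p M := by
  induction h with
  | of_isZero h =>
    intro Q g hg hQ
    exact absurd (isZero_tgt_of_epi g hg h) hQ
  | step S hS h1 h3 IH =>
    intro Q g hg hQnz
    haveI := hg
    haveI := hS.mono_f
    haveI := hS.epi_g
    have hfacD : S.f ≫ (g ≫ cokernel.π (Abelian.image.ι (S.f ≫ g))) = 0 := by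
      rw [← Category.assoc]; exact comp_cokernel_image_zero (S.f ≫ g)
    obtain ⟨h', hh'⟩ := CokernelCofork.IsColimit.desc' hS.gIsCokernel
      (g ≫ cokernel.π (Abelian.image.ι (S.f ≫ g))) hfacD
    have hh2 : S.g ≫ h' = g ≫ cokernel.π (Abelian.image.ι (S.f ≫ g)) := hh'
    have hepi : Epi (S.g ≫ h') := by rw [hh2]; exact epi_comp _ _
    haveI := hepi
    haveI : Epi h' := epi_of_epi S.g h'
    by_cases hDz : IsZero (cokernel (Abelian.image.ι (S.f ≫ g)))
    · haveI : Epi (Abelian.image.ι (S.f ≫ g)) := epi_of_isZero_cokernel _ hDz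
      haveI : IsIso (Abelian.image.ι (S.f ≫ g)) := isIso_of_mono_of_epi _
      have hIz : ¬ IsZero (Abelian.image (S.f ≫ g)) := fun h =>
        hQnz (isZero_tgt_of_epi (Abelian.image.ι (S.f ≫ g)) inferInstance h)
      have hIp : p ≤ φ (Abelian.image (S.f ≫ g)) :=
        IH (Abelian.factorThruImage (S.f ≫ g)) inferInstance hIz
      have heq : φ (Abelian.image (S.f ≫ g)) = φ Q := hiso (asIso (Abelian.image.ι (S.f ≫ g)))
      exact heq ▸ hIp
    · have hX3nz : ¬ IsZero S.X₃ := fun h => hDz (isZero_tgt_of_epi h' inferInstance h)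
      have hX3 : Semistable φ S.X₃ ∧ p ≤ φ S.X₃ := h3.resolve_left hX3nz
      have hDp : p ≤ φ (cokernel (Abelian.image.ι (S.f ≫ g))) :=
        le_trans hX3.2 (phase_le_quot hss hiso hX3.1 h' inferInstance hDz)
      by_cases hIz : IsZero (Abelian.image (S.f ≫ g))
      · have hseI := shortExact_of_mono (Abelian.image.ι (S.f ≫ g)) inferInstance
        have hmono : Mono (cokernel.π (Abelian.image.ι (S.f ≫ g))) := by
          apply mono_of_zero_of_map_zero
          intro a ha
          obtain ⟨b, hb⟩ := pseudo_exact_of_exact hseI.exact a ha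
          have h0 : Abelian.image.ι (S.f ≫ g) = 0 := hIz.eq_of_src _ _
          rw [← hb, h0]
          exact zero_apply _ _
        haveI := hmono
        haveI : IsIso (cokernel.π (Abelian.image.ι (S.f ≫ g))) := isIso_of_mono_of_epi _
        have heq : φ Q = φ (cokernel (Abelian.image.ι (S.f ≫ g))) :=
          hiso (asIso (cokernel.π (Abelian.image.ι (S.f ≫ g))))
        rw [heq]
        exact hDp
      · have hIp : p ≤ φ (Abelian.image (S.f ≫ g)) :=
          IH (Abelian.factorThruImage (S.f ≫ g)) inferInstance hIz
        have hseI := shortExact_of_mono (Abelian.image.ι (S.f ≫ g)) inferInstance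
        rcases hss _ hseI hIz hQnz hDz with ⟨hh1, hh2⟩ | ⟨hh1, hh2⟩ | ⟨hh1, hh2⟩
        · exact le_trans hIp (le_of_lt hh1)
        · exact le_trans hDp (le_of_lt hh1)
        · exact hh1 ▸ hIp

end Stability

end TpAux

/-- In an abelian length category, `T_p` (defined via maximally destabilizing quotients)
coincides with the quotient-object characterization and with `Filt (A_{≥ p})`. -/
theorem Tp_characterizations {C : Type u} [Category.{v} C] [Abelian C]
    [∀ X : C, IsNoetherianObject X] [∀ X : C, IsArtinianObject X]
    {P : Type*} [LinearOrder P] (φ : C → P)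
    (hss : SeeSaw φ) (hiso : IsoInvariant φ) (p : P) :
    (∀ M : C, TpMDQ φ p M ↔ TpQuot φ p M) ∧
    (∀ M : C, TpMDQ φ p M ↔ Filt (Ageq φ p) M) := by
  have h1 : ∀ M : C, TpMDQ φ p M ↔ TpQuot φ p M := by
    intro M
    constructor
    · rintro (hz | ⟨N, q, hq, hp⟩)
      · intro Q g hg hQ
        exact absurd (TpAux.isZero_tgt_of_epi g hg hz) hQ
      · intro Q g hg hQ
        exact le_trans hp ((hq.2.2.2 g hg hQ).1)
    · intro h
      by_cases hz : IsZero M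
      · exact Or.inl hz
      · obtain ⟨N, q, hq⟩ := TpAux.exists_mdq hss hiso M hz
        exact Or.inr ⟨N, q, hq, h q hq.1 hq.2.1⟩
  refine ⟨h1, fun M => ?_⟩
  constructor
  · intro h
    exact TpAux.filt_of_tpQuot hss hiso p M ((h1 M).1 h)
  · intro h
    exact (h1 M).2 (TpAux.tpQuot_of_filt hss hiso p h)
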